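/- arXiv:math/0402362 — 2 statements merged into one kernel-verified Lean document; each statement's English description precedes it below -/
import Mathlib

section
/- Let α > 0, β ∈ ℝ, let w be the normalized pure Fisher–Hartwig weight with parameters α, β, and let (φ_n) be a system of orthonormal polynomials for w. For each n ≥ 0 define I_n = ∫_0^{2π} φ_n(ξ)·conj(φ_n*(ξ))·w(ξ) dθ and J_n = ∫_0^{2π} [φ_n(ξ)·conj(φ_n*(ξ))/(1−ξ)]·w(ξ) dθ, where ξ = e^{iθ}. Then I_n = r_n and J_n = (α + iβ − n)·r_n/(2α). -/
open Complex Polynomial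

noncomputable def uc (θ : ℝ) : ℂ := Complex.exp (θ * Complex.I)

noncomputable def starRev (p : Polynomial ℂ) : Polynomial ℂ :=
  (p.map (starRingEnd ℂ)).reverse

noncomputable def kC (φ : ℕ → Polynomial ℂ) (n : ℕ) : ℂ := (φ n).leadingCoeff

noncomputable def rC (φ : ℕ → Polynomial ℂ) (n : ℕ) : ℂ := (φ n).coeff 0 / kC φ n

noncomputable def mC (φ : ℕ → Polynomial ℂ) (n : ℕ) : ℂ := kC φ n / kC φ (n+1)

noncomputable def sC (φ : ℕ → Polynomial ℂ) (n : ℕ) : ℂ := rC φ (n+1) / rC φ n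

/-- A system of orthonormal polynomials on the unit circle for the weight `w`:
degree of `φ n` is `n`, leading coefficient real and positive, orthonormality. -/
def OPS (w : ℝ → ℂ) (φ : ℕ → Polynomial ℂ) : Prop :=
  (∀ n : ℕ, (φ n).degree = n) ∧
  (∀ n : ℕ, ∃ c : ℝ, 0 < c ∧ (φ n).leadingCoeff = (c : ℂ)) ∧
  (∀ m n : ℕ, (∫ θ in (0:ℝ)..(2 * Real.pi),
      (φ m).eval (uc θ) * (starRingEnd ℂ) ((φ n).eval (uc θ)) * w θ)
    = if m = n then 1 else 0)

/-- Normalisation constant of the pure Fisher-Hartwig weight. -/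
noncomputable def FHC (α β : ℝ) : ℂ :=
  Complex.Gamma (1 + (α : ℂ) + (β : ℂ) * Complex.I) *
    Complex.Gamma (1 + (α : ℂ) - (β : ℂ) * Complex.I) /
    (2 * (Real.pi : ℂ) * Complex.Gamma (1 + 2 * (α : ℂ)))

/-- The normalized pure Fisher-Hartwig weight on the unit circle. -/
noncomputable def FHw (α β : ℝ) (θ : ℝ) : ℂ :=
  FHC α β * (((2 * Real.sin (θ / 2)) ^ (2 * α) : ℝ) : ℂ) *
    ((Real.exp (-β * (θ - Real.pi)) : ℝ) : ℂ)

namespace FHaux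

open MeasureTheory intervalIntegral Set Real

lemma uc_ne_zero (θ : ℝ) : uc θ ≠ 0 := Complex.exp_ne_zero _

lemma conj_uc (θ : ℝ) : (starRingEnd ℂ) (uc θ) = (uc θ)⁻¹ := by
  rw [uc, ← Complex.exp_conj, ← Complex.exp_neg]
  congr 1
  simp [Complex.conj_I]

lemma continuous_uc : Continuous uc := by
  unfold uc; fun_prop

lemma hasDerivAt_uc (θ : ℝ) : HasDerivAt uc (uc θ * Complex.I) θ := by
  have h1 : HasDerivAt (fun t : ℝ => (t : ℂ) * Complex.I) Complex.I θ := by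
    simpa using (HasDerivAt.ofReal_comp (hasDerivAt_id θ)).mul_const Complex.I
  unfold uc
  exact h1.cexp

lemma uc_eq (θ : ℝ) : uc θ = (Real.cos θ : ℂ) + (Real.sin θ : ℂ) * Complex.I := by
  rw [uc, Complex.exp_mul_I, Complex.ofReal_cos, Complex.ofReal_sin]

lemma one_sub_uc (θ : ℝ) :
    1 - uc θ = -(2 * Real.sin (θ/2) : ℝ) * (Complex.I * uc (θ/2)) := by
  have h2 : (2:ℝ) * (θ/2) = θ := by ring
  have hc := Real.cos_two_mul (θ/2)
  have hs2 := Real.sin_two_mul (θ/2)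
  rw [h2] at hc hs2
  have hpy := Real.sin_sq_add_cos_sq (θ/2)
  rw [uc_eq θ, uc_eq (θ/2), hc, hs2]
  have hcos : Real.cos (θ/2) ^ 2 = 1 - Real.sin (θ/2) ^ 2 := by linarith
  rw [hcos]
  push_cast
  ring_nf
  rw [Complex.I_sq]
  ring

lemma abs_one_sub_uc {θ : ℝ} (h1 : 0 ≤ θ) (h2 : θ ≤ 2 * Real.pi) :
    ‖1 - uc θ‖ = 2 * Real.sin (θ/2) := by
  have hs : 0 ≤ Real.sin (θ/2) :=
    Real.sin_nonneg_of_nonneg_of_le_pi (by linarith) (by linarith)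
  rw [one_sub_uc θ, norm_mul, norm_mul, norm_neg]
  rw [Complex.norm_real, Real.norm_eq_abs, Complex.norm_I, uc, Complex.norm_exp_ofReal_mul_I]
  rw [_root_.abs_of_nonneg (by linarith : (0:ℝ) ≤ 2 * Real.sin (θ/2))]
  ring

lemma inv_one_sub_uc {θ : ℝ} (hs : Real.sin (θ/2) ≠ 0) :
    (1 - uc θ)⁻¹ = 1/2 + (Real.cos (θ/2) / Real.sin (θ/2) : ℝ) * Complex.I / 2 := by
  have hC : (Real.sin (θ/2) : ℂ) ≠ 0 := Complex.ofReal_ne_zero.mpr hs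
  have hpy := Real.sin_sq_add_cos_sq (θ/2)
  have hpyC : (Real.sin (θ/2):ℂ)^2 + (Real.cos (θ/2):ℂ)^2 = 1 := by
    exact_mod_cast congrArg (fun x:ℝ => (x:ℂ)) hpy
  symm
  apply eq_inv_of_mul_eq_one_left
  rw [one_sub_uc θ, uc_eq (θ/2)]
  push_cast at hC hpyC ⊢
  set S := Complex.sin (↑θ / 2) with hS
  set Cc := Complex.cos (↑θ / 2) with hCc
  field_simp
  linear_combination hpyC + (-(S^2+Cc^2) - I*S*Cc)*Complex.I_sq



lemma continuous_FHw (α β : ℝ) (hα : 0 < α) : Continuous (FHw α β) := by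
  unfold FHw
  apply Continuous.mul
  · apply Continuous.mul continuous_const
    apply Complex.continuous_ofReal.comp
    apply continuous_iff_continuousAt.mpr
    intro x
    exact ContinuousAt.rpow_const (by fun_prop) (Or.inr (by positivity))
  · fun_prop

lemma FHw_zero (α β : ℝ) (hα : 0 < α) : FHw α β 0 = 0 := by
  have h : ((0:ℝ)/2) = 0 := by norm_num
  simp [FHw, h, Real.zero_rpow (by positivity : (2*α) ≠ 0)]

lemma FHw_tpi (α β : ℝ) (hα : 0 < α) : FHw α β (2*Real.pi) = 0 := by
  have h : ((2*Real.pi)/2) = Real.pi := by ring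
  simp [FHw, h, Real.sin_pi, Real.zero_rpow (by positivity : (2*α) ≠ 0)]

lemma intInt_mul_FHw (α β : ℝ) (hα : 0 < α) (f : ℝ → ℂ) (hf : Continuous f) :
    IntervalIntegrable (fun θ => f θ * FHw α β θ) volume 0 (2*Real.pi) :=
  (hf.mul (continuous_FHw α β hα)).intervalIntegrable _ _

lemma integrableOn_sinpow_left {e : ℝ} (he : -1 < e) :
    IntegrableOn (fun θ : ℝ => (2*Real.sin (θ/2)) ^ e) (Ioc 0 Real.pi) := by
  have hπ : (0:ℝ) < Real.pi := Real.pi_pos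
  set c : ℝ := max 1 ((2/Real.pi) ^ e) with hc
  have hg : IntegrableOn (fun θ : ℝ => c * θ ^ e) (Ioc 0 Real.pi) := by
    have h := intervalIntegral.intervalIntegrable_rpow' (a := 0) (b := Real.pi) he
    rw [intervalIntegrable_iff_integrableOn_Ioc_of_le hπ.le] at h
    exact h.const_mul c
  apply Integrable.mono' hg
  · apply ContinuousOn.aestronglyMeasurable _ measurableSet_Ioc
    intro x hx
    have hsx : 0 < Real.sin (x/2) :=
      Real.sin_pos_of_pos_of_lt_pi (by linarith [hx.1]) (by linarith [hx.2, hπ])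
    exact (ContinuousAt.rpow_const (by fun_prop) (Or.inl (by positivity))).continuousWithinAt
  · refine (ae_restrict_iff' measurableSet_Ioc).2 (Filter.Eventually.of_forall fun θ hθ => ?_)
    obtain ⟨h0, hπ'⟩ := hθ
    have hs : 0 < Real.sin (θ/2) :=
      Real.sin_pos_of_pos_of_lt_pi (by linarith) (by linarith)
    have hb1 : 2*Real.sin (θ/2) ≤ θ := by
      have := Real.sin_le (by linarith : 0 ≤ θ/2); linarith
    have hb2 : (2/Real.pi) * θ ≤ 2*Real.sin (θ/2) := by
      have h := Real.mul_le_sin (x := θ/2) (by linarith) (by linarith)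
      calc (2/Real.pi)*θ = 2*(2/Real.pi*(θ/2)) := by ring
      _ ≤ 2*Real.sin (θ/2) := by linarith
    rw [Real.norm_eq_abs, _root_.abs_of_nonneg (Real.rpow_nonneg (by positivity) _)]
    rcases le_or_gt 0 e with he0 | he0
    · have h1 : (2*Real.sin (θ/2))^e ≤ θ^e := Real.rpow_le_rpow (by positivity) hb1 he0
      have h2 : (0:ℝ) ≤ θ^e := Real.rpow_nonneg h0.le _
      have h3 : (1:ℝ) ≤ c := le_max_left _ _
      nlinarith
    · have h1 : (2*Real.sin (θ/2))^e ≤ ((2/Real.pi)*θ)^e :=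
        Real.rpow_le_rpow_of_nonpos (by positivity) hb2 he0.le
      have h2 : ((2/Real.pi)*θ)^e = (2/Real.pi)^e * θ^e := Real.mul_rpow (by positivity) h0.le
      have h3 : (2/Real.pi)^e ≤ c := le_max_right _ _
      have h4 : (0:ℝ) ≤ θ^e := Real.rpow_nonneg h0.le _
      nlinarith [Real.rpow_nonneg (le_of_lt (show (0:ℝ) < 2/Real.pi by positivity)) e]
  
lemma integrableOn_sinpow {e : ℝ} (he : -1 < e) :
    IntegrableOn (fun θ : ℝ => (2*Real.sin (θ/2)) ^ e) (Ioo 0 (2*Real.pi)) := by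
  have hπ := Real.pi_pos
  have hL := integrableOn_sinpow_left he
  have hR : IntegrableOn (fun θ : ℝ => (2*Real.sin (θ/2)) ^ e) (Ioc Real.pi (2*Real.pi)) := by
    have h1 : IntervalIntegrable (fun θ : ℝ => (2*Real.sin (θ/2)) ^ e) volume 0 Real.pi :=
      (intervalIntegrable_iff_integrableOn_Ioc_of_le hπ.le).2 hL
    have h2 := h1.comp_sub_left (2*Real.pi)
    have h3 : (fun x : ℝ => (2*Real.sin ((2*Real.pi - x)/2)) ^ e)
        = fun x : ℝ => (2*Real.sin (x/2)) ^ e := by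
      funext x
      have hx : (2*Real.pi - x)/2 = Real.pi - x/2 := by ring
      rw [hx, Real.sin_pi_sub]
    rw [h3] at h2
    have e1 : 2*Real.pi - 0 = 2*Real.pi := by ring
    have e2 : 2*Real.pi - Real.pi = Real.pi := by ring
    rw [e1, e2] at h2
    exact (intervalIntegrable_iff_integrableOn_Ioc_of_le (by linarith)).1 h2.symm
  exact (hL.union hR).mono_set (fun x hx => by
    rcases le_or_gt x Real.pi with h|h
    · exact Or.inl ⟨hx.1, h⟩
    · exact Or.inr ⟨h, hx.2.le⟩)

lemma intInt_of_bound {e : ℝ} (he : -1 < e) (f : ℝ → ℂ) (C : ℝ)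
    (hf : ContinuousOn f (Ioo 0 (2*Real.pi)))
    (hb : ∀ θ ∈ Ioo (0:ℝ) (2*Real.pi), ‖f θ‖ ≤ C * (2*Real.sin (θ/2)) ^ e) :
    IntervalIntegrable f volume 0 (2*Real.pi) := by
  have hπ := Real.pi_pos
  rw [intervalIntegrable_iff_integrableOn_Ioc_of_le (by linarith)]
  rw [integrableOn_Ioc_iff_integrableOn_Ioo]
  apply Integrable.mono' ((integrableOn_sinpow he).const_mul C)
  · exact hf.aestronglyMeasurable measurableSet_Ioo
  · exact (ae_restrict_iff' measurableSet_Ioo).2 (Filter.Eventually.of_forall hb)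


noncomputable def DFH (α β : ℝ) (θ : ℝ) : ℂ :=
  FHC α β * (((2*α*(2*Real.sin (θ/2)) ^ (2*α-1) * Real.cos (θ/2)
      - β * (2*Real.sin (θ/2)) ^ (2*α)) * Real.exp (-β*(θ-Real.pi)) : ℝ) : ℂ)

lemma hasDerivAt_FHw (α β : ℝ) {θ : ℝ} (hθ : θ ∈ Ioo 0 (2*Real.pi)) :
    HasDerivAt (FHw α β) (DFH α β θ) θ := by
  have hs : 0 < Real.sin (θ/2) :=
    Real.sin_pos_of_pos_of_lt_pi (by linarith [hθ.1]) (by linarith [hθ.2])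
  have hinner : HasDerivAt (fun t : ℝ => 2*Real.sin (t/2)) (Real.cos (θ/2)) θ := by
    have h1 : HasDerivAt (fun t : ℝ => t/2) (1/2) θ := (hasDerivAt_id θ).div_const 2
    have h2 := (Real.hasDerivAt_sin (θ/2)).comp θ h1
    have h3 := h2.const_mul (2:ℝ)
    exact h3.congr_deriv (by ring)
  have hf : HasDerivAt (fun t : ℝ => (2*Real.sin (t/2)) ^ (2*α))
      (Real.cos (θ/2) * (2*α) * (2*Real.sin (θ/2)) ^ (2*α - 1)) θ :=
    hinner.rpow_const (Or.inl (by positivity))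
  have hexp : HasDerivAt (fun t : ℝ => Real.exp (-β*(t-Real.pi)))
      (Real.exp (-β*(θ-Real.pi)) * (-β)) θ := by
    have h1 : HasDerivAt (fun t : ℝ => -β*(t-Real.pi)) (-β) θ := by
      simpa using ((hasDerivAt_id θ).sub_const Real.pi).const_mul (-β)
    simpa using h1.exp
  have hprod := hf.mul hexp
  have hC := (hprod.ofReal_comp).const_mul (FHC α β)
  convert hC using 1
  · rfl
  · funext t
    show FHw α β t = _
    unfold FHw
    simp only [Pi.mul_apply]
    push_cast
    ring
  · unfold DFH
    ring

lemma hasDerivAt_ucinvpow (n : ℕ) (θ : ℝ) :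
    HasDerivAt (fun t : ℝ => ((uc t)⁻¹)^n) ((-(n:ℂ)*Complex.I) * ((uc θ)⁻¹)^n) θ := by
  have hfun : ∀ t : ℝ, ((uc t)⁻¹)^n = Complex.exp ((-(n:ℂ)*Complex.I) * t) := by
    intro t
    rw [uc, ← Complex.exp_neg, ← Complex.exp_nat_mul]
    congr 1
    push_cast
    ring
  have h1 : HasDerivAt (fun t : ℝ => Complex.exp ((-(n:ℂ)*Complex.I) * t))
      (Complex.exp ((-(n:ℂ)*Complex.I) * θ) * (-(n:ℂ)*Complex.I)) θ := by
    have hlin : HasDerivAt (fun t : ℝ => (-(n:ℂ)*Complex.I) * (t:ℂ)) (-(n:ℂ)*Complex.I) θ := by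
      simpa using (HasDerivAt.ofReal_comp (hasDerivAt_id θ)).const_mul (-(n:ℂ)*Complex.I)
    simpa using hlin.cexp
  rw [funext hfun, hfun θ]
  simpa [mul_comm] using h1

lemma hasDerivAt_evalp (p : Polynomial ℂ) (θ : ℝ) :
    HasDerivAt (fun t : ℝ => p.eval (uc t)) ((uc θ * Complex.I) * (derivative p).eval (uc θ)) θ := by
  have h := (p.hasDerivAt (uc θ)).scomp θ (hasDerivAt_uc θ)
  simp only [smul_eq_mul] at h
  exact h

lemma hasDerivAt_g (p : Polynomial ℂ) (n : ℕ) (θ : ℝ) :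
    HasDerivAt (fun t => p.eval (uc t) * (((uc t)⁻¹)^n * p.eval (uc t)))
      (Complex.I * ((C 2 * X * derivative p).eval (uc θ) * (((uc θ)⁻¹)^n * p.eval (uc θ)))
        - Complex.I * n * (p.eval (uc θ) * (((uc θ)⁻¹)^n * p.eval (uc θ)))) θ := by
  have hP := hasDerivAt_evalp p θ
  have hE := hasDerivAt_ucinvpow n θ
  have h := hP.mul (hE.mul hP)
  convert h using 1
  · rfl
  · rfl
  simp only [eval_mul, eval_C, eval_X, Pi.mul_apply]
  ring

lemma uc_inv (θ : ℝ) : (uc θ)⁻¹ = uc (-θ) := by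
  rw [uc, uc, ← Complex.exp_neg]
  congr 1
  push_cast
  ring

lemma continuous_ucinv_pow (i : ℕ) : Continuous (fun θ : ℝ => ((uc θ)⁻¹)^i) := by
  have h : (fun θ : ℝ => ((uc θ)⁻¹)^i) = fun θ => (uc (-θ))^i := by
    funext θ; rw [uc_inv]
  rw [h]
  exact (continuous_uc.comp continuous_neg).pow i

lemma continuous_evalp (p : Polynomial ℂ) : Continuous (fun θ : ℝ => p.eval (uc θ)) :=
  p.continuous.comp continuous_uc

section OPSlemmas

variable {α β : ℝ} {φ : ℕ → Polynomial ℂ}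

lemma kC_conj (hφ : OPS (FHw α β) φ) (m : ℕ) : (starRingEnd ℂ) (kC φ m) = kC φ m := by
  obtain ⟨c, hc, hk⟩ := hφ.2.1 m
  unfold kC; rw [hk, Complex.conj_ofReal]

lemma kC_ne (hφ : OPS (FHw α β) φ) (m : ℕ) : kC φ m ≠ 0 := by
  obtain ⟨c, hc, hk⟩ := hφ.2.1 m
  unfold kC; rw [hk]
  exact_mod_cast hc.ne'

lemma natDeg (hφ : OPS (FHw α β) φ) (m : ℕ) : (φ m).natDegree = m :=
  natDegree_eq_of_degree_eq_some (hφ.1 m)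

lemma conj_eval_uc (p : Polynomial ℂ) (N : ℕ) (hN : p.natDegree < N) (θ : ℝ) :
    (starRingEnd ℂ) (p.eval (uc θ)) =
      ∑ i ∈ Finset.range N, (starRingEnd ℂ) (p.coeff i) * ((uc θ)⁻¹)^i := by
  rw [Polynomial.eval_eq_sum_range' hN, map_sum]
  refine Finset.sum_congr rfl fun i _ => ?_
  rw [map_mul, map_pow, conj_uc]

lemma SL (hα : 0 < α) (hφ : OPS (FHw α β) φ) (n : ℕ) :
    ∀ m, m ≤ n →
      (∫ θ in (0:ℝ)..(2*Real.pi), (φ n).eval (uc θ) * ((uc θ)⁻¹)^m * FHw α β θ)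
        = if m = n then 1 / kC φ n else 0 := by
  intro m
  induction m using Nat.strong_induction_on with
  | _ m IH =>
    intro hmn
    have horth := hφ.2.2 n m
    have hpt : ∀ θ ∈ Set.uIcc (0:ℝ) (2*Real.pi), (fun θ : ℝ => (φ n).eval (uc θ) *
          (starRingEnd ℂ) ((φ m).eval (uc θ)) * FHw α β θ) θ
        = (fun θ : ℝ => ∑ i ∈ Finset.range (m+1),
            (starRingEnd ℂ) ((φ m).coeff i) *
              ((φ n).eval (uc θ) * ((uc θ)⁻¹)^i * FHw α β θ)) θ := by
      intro θ _
      simp only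
      rw [conj_eval_uc (φ m) (m+1) (by rw [natDeg hφ]; omega) θ, Finset.mul_sum, Finset.sum_mul]
      exact Finset.sum_congr rfl fun i _ => by ring
    rw [intervalIntegral.integral_congr hpt] at horth
    rw [intervalIntegral.integral_finset_sum (fun i _ =>
      ((intInt_mul_FHw α β hα (fun θ => (φ n).eval (uc θ) * ((uc θ)⁻¹)^i) ((continuous_evalp (φ n)).mul
        (continuous_ucinv_pow i))).const_mul _))] at horth
    simp only [intervalIntegral.integral_const_mul] at horth
    rw [Finset.sum_range_succ] at horth
    have hz : ∀ i ∈ Finset.range m, (starRingEnd ℂ) ((φ m).coeff i) *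
        (∫ θ in (0:ℝ)..(2*Real.pi), (φ n).eval (uc θ) * ((uc θ)⁻¹)^i * FHw α β θ) = 0 := by
      intro i hi
      have him : i < m := Finset.mem_range.1 hi
      rw [IH i him (le_trans him.le hmn), if_neg (by omega), mul_zero]
    rw [Finset.sum_eq_zero hz, zero_add] at horth
    have hcm : (φ m).coeff m = kC φ m := by
      unfold kC leadingCoeff
      rw [natDeg hφ]
    rw [hcm, kC_conj hφ] at horth
    rcases eq_or_ne m n with h | h
    · subst h
      rw [if_pos rfl, eq_div_iff (kC_ne hφ m), mul_comm]
      rw [if_pos rfl] at horth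
      exact horth
    · rw [if_neg h]
      rw [if_neg (Ne.symm h)] at horth
      exact (mul_eq_zero.1 horth).resolve_left (kC_ne hφ m)

lemma ML (hα : 0 < α) (hφ : OPS (FHw α β) φ) (n : ℕ) (Q : Polynomial ℂ) (hQ : Q.natDegree ≤ n) :
    (∫ θ in (0:ℝ)..(2*Real.pi),
        Q.eval (uc θ) * (((uc θ)⁻¹)^n * (φ n).eval (uc θ)) * FHw α β θ)
      = Q.coeff 0 / kC φ n := by
  have hpt : ∀ θ ∈ Set.uIcc (0:ℝ) (2*Real.pi),
      (fun θ : ℝ => Q.eval (uc θ) * (((uc θ)⁻¹)^n * (φ n).eval (uc θ)) * FHw α β θ) θ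
      = (fun θ : ℝ => ∑ j ∈ Finset.range (n+1),
          Q.coeff j * ((φ n).eval (uc θ) * ((uc θ)⁻¹)^(n-j) * FHw α β θ)) θ := by
    intro θ _
    simp only
    rw [Polynomial.eval_eq_sum_range' (lt_of_le_of_lt hQ (Nat.lt_succ_self n)) (uc θ),
      Finset.sum_mul, Finset.sum_mul]
    refine Finset.sum_congr rfl fun j hj => ?_
    have hj' : j ≤ n := Nat.lt_succ_iff.1 (Finset.mem_range.1 hj)
    have hsplit : ((uc θ)⁻¹)^n = ((uc θ)⁻¹)^(n-j) * ((uc θ)⁻¹)^j := by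
      rw [← pow_add]; congr 1; omega
    have hinv : (uc θ)^j * ((uc θ)⁻¹)^j = 1 := by
      rw [← mul_pow, mul_inv_cancel₀ (uc_ne_zero θ), one_pow]
    rw [hsplit]
    calc Q.coeff j * (uc θ)^j * (((uc θ)⁻¹)^(n-j) * ((uc θ)⁻¹)^j * (φ n).eval (uc θ)) * FHw α β θ
        = Q.coeff j * ((φ n).eval (uc θ) * ((uc θ)⁻¹)^(n-j) * FHw α β θ)
            * ((uc θ)^j * ((uc θ)⁻¹)^j) := by ring
      _ = Q.coeff j * ((φ n).eval (uc θ) * ((uc θ)⁻¹)^(n-j) * FHw α β θ) := by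
            rw [hinv, mul_one]
  rw [intervalIntegral.integral_congr hpt]
  rw [intervalIntegral.integral_finset_sum (fun j _ =>
    ((intInt_mul_FHw α β hα (fun θ => (φ n).eval (uc θ) * ((uc θ)⁻¹)^(n-j)) ((continuous_evalp (φ n)).mul
      (continuous_ucinv_pow _))).const_mul _))]
  simp only [intervalIntegral.integral_const_mul]
  rw [Finset.sum_eq_single 0]
  · rw [SL hα hφ n (n-0) (by omega), if_pos (by omega), mul_one_div]
  · intro j hj hj0
    have hj' : j ≤ n := Nat.lt_succ_iff.1 (Finset.mem_range.1 hj)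
    rw [SL hα hφ n (n-j) (by omega), if_neg (by omega), mul_zero]
  · intro h0
    exact absurd (Finset.mem_range.2 (Nat.succ_pos n)) h0

end OPSlemmas

lemma conj_starRev_eval (p : Polynomial ℂ) (θ : ℝ) :
    (starRingEnd ℂ) ((starRev p).eval (uc θ)) = ((uc θ)⁻¹)^(p.natDegree) * p.eval (uc θ) := by
  set n := p.natDegree with hn
  have hmapdeg : (p.map (starRingEnd ℂ)).natDegree = n :=
    Polynomial.natDegree_map_eq_of_injective (starRingEnd ℂ).injective p
  have hrevdeg : (starRev p).natDegree < n + 1 := by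
    unfold starRev
    exact lt_of_le_of_lt (hmapdeg ▸ (p.map (starRingEnd ℂ)).reverse_natDegree_le)
      (Nat.lt_succ_self n)
  have hev : (starRev p).eval (uc θ)
      = ∑ i ∈ Finset.range (n+1), (starRingEnd ℂ) (p.coeff (n - i)) * (uc θ)^i := by
    rw [Polynomial.eval_eq_sum_range' hrevdeg]
    refine Finset.sum_congr rfl fun i hi => ?_
    congr 1
    show (starRev p).coeff i = _
    unfold starRev
    rw [Polynomial.coeff_reverse, hmapdeg,
      Polynomial.revAt_le (Nat.lt_succ_iff.1 (Finset.mem_range.1 hi)), Polynomial.coeff_map]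
  rw [hev, map_sum]
  have hterm : ∀ i ∈ Finset.range (n+1),
      (starRingEnd ℂ) ((starRingEnd ℂ) (p.coeff (n-i)) * (uc θ)^i)
      = p.coeff (n-i) * ((uc θ)⁻¹)^i := by
    intro i _
    rw [map_mul, Complex.conj_conj, map_pow, conj_uc]
  rw [Finset.sum_congr rfl hterm]
  rw [Polynomial.eval_eq_sum_range' (show p.natDegree < n + 1 by omega) (uc θ), Finset.mul_sum]
  rw [← Finset.sum_range_reflect (fun j => ((uc θ)⁻¹)^n * (p.coeff j * (uc θ)^j)) (n+1)]
  refine Finset.sum_congr rfl fun i hi => ?_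
  have hi' : i ≤ n := Nat.lt_succ_iff.1 (Finset.mem_range.1 hi)
  have hidx : n + 1 - 1 - i = n - i := by omega
  rw [hidx]
  have hsplit : ((uc θ)⁻¹)^n = ((uc θ)⁻¹)^i * ((uc θ)⁻¹)^(n-i) := by
    rw [← pow_add]; congr 1; omega
  have hinv : ((uc θ)⁻¹)^(n-i) * (uc θ)^(n-i) = 1 := by
    rw [← mul_pow, inv_mul_cancel₀ (uc_ne_zero θ), one_pow]
  rw [hsplit]
  calc p.coeff (n-i) * ((uc θ)⁻¹)^i
      = (((uc θ)⁻¹)^(n-i) * (uc θ)^(n-i)) * (p.coeff (n-i) * ((uc θ)⁻¹)^i) := by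
        rw [hinv, one_mul]
    _ = ((uc θ)⁻¹)^i * ((uc θ)⁻¹)^(n-i) * (p.coeff (n-i) * (uc θ)^(n-i)) := by ring

lemma exp_bound (β : ℝ) {θ : ℝ} (h1 : 0 ≤ θ) (h2 : θ ≤ 2*Real.pi) :
    Real.exp (-β*(θ-Real.pi)) ≤ Real.exp (|β| * Real.pi) := by
  apply Real.exp_le_exp.2
  calc -β*(θ-Real.pi) ≤ |(-β)*(θ-Real.pi)| := le_abs_self _
    _ = |β| * |θ-Real.pi| := by rw [abs_mul, abs_neg]
    _ ≤ |β| * Real.pi := by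
        apply mul_le_mul_of_nonneg_left _ (abs_nonneg β)
        rw [abs_le]; constructor <;> linarith

lemma norm_FHw_le (α β : ℝ) {θ : ℝ} (h1 : 0 ≤ θ) (h2 : θ ≤ 2*Real.pi) :
    ‖FHw α β θ‖ ≤ ‖FHC α β‖ * Real.exp (|β| * Real.pi) * (2*Real.sin (θ/2))^(2*α) := by
  have hπ := Real.pi_pos
  have hs : 0 ≤ Real.sin (θ/2) :=
    Real.sin_nonneg_of_nonneg_of_le_pi (by linarith) (by linarith)
  have hE := exp_bound β h1 h2
  have h3 : (0:ℝ) ≤ (2*Real.sin (θ/2))^(2*α) := Real.rpow_nonneg (by positivity) _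
  unfold FHw
  rw [norm_mul, norm_mul, Complex.norm_real, Complex.norm_real, Real.norm_eq_abs,
    Real.norm_eq_abs, _root_.abs_of_nonneg (Real.rpow_nonneg (by positivity) _), Real.abs_exp]
  nlinarith [norm_nonneg (FHC α β), Real.exp_pos (|β| * Real.pi),
    mul_le_mul_of_nonneg_left hE (mul_nonneg (norm_nonneg (FHC α β)) h3)]

lemma norm_DFH_le (α β : ℝ) (hα : 0 < α) {θ : ℝ} (hθ : θ ∈ Ioo 0 (2*Real.pi)) :
    ‖DFH α β θ‖ ≤ ‖FHC α β‖ * ((2*α + 2*|β|) * Real.exp (|β| * Real.pi)) *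
      (2*Real.sin (θ/2))^(2*α-1) := by
  obtain ⟨h1, h2⟩ := hθ
  have hπ := Real.pi_pos
  have hs : 0 < Real.sin (θ/2) :=
    Real.sin_pos_of_pos_of_lt_pi (by linarith) (by linarith)
  have hsle : 2*Real.sin (θ/2) ≤ 2 := by nlinarith [Real.sin_le_one (θ/2)]
  have hspos : (0:ℝ) < 2*Real.sin (θ/2) := by linarith
  have hpow : (2*Real.sin (θ/2))^(2*α) = (2*Real.sin (θ/2))^(2*α-1) * (2*Real.sin (θ/2)) := by
    have hrw : 2*α = (2*α-1)+1 := by ring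
    rw [hrw]
    rw [Real.rpow_add hspos, Real.rpow_one]
    ring_nf
  have hE := exp_bound β h1.le h2.le
  have hp1 : (0:ℝ) ≤ (2*Real.sin (θ/2))^(2*α-1) := Real.rpow_nonneg hspos.le _
  have hA : |2*α*(2*Real.sin (θ/2))^(2*α-1)*Real.cos (θ/2) - β*(2*Real.sin (θ/2))^(2*α)|
      ≤ (2*α + 2*|β|) * (2*Real.sin (θ/2))^(2*α-1) := by
    have t1 : |2*α*(2*Real.sin (θ/2))^(2*α-1)*Real.cos (θ/2)|
        ≤ 2*α*(2*Real.sin (θ/2))^(2*α-1) := by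
      rw [abs_mul, _root_.abs_of_nonneg (by positivity : (0:ℝ) ≤ 2*α*(2*Real.sin (θ/2))^(2*α-1))]
      nlinarith [Real.abs_cos_le_one (θ/2),
        (by positivity : (0:ℝ) ≤ 2*α*(2*Real.sin (θ/2))^(2*α-1)), abs_nonneg (Real.cos (θ/2))]
    have t2 : |β*(2*Real.sin (θ/2))^(2*α)| ≤ 2*|β| * (2*Real.sin (θ/2))^(2*α-1) := by
      rw [abs_mul, _root_.abs_of_nonneg (Real.rpow_nonneg hspos.le _), hpow]
      nlinarith [abs_nonneg β, mul_le_mul_of_nonneg_left hsle (mul_nonneg (abs_nonneg β) hp1)]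
    calc |2*α*(2*Real.sin (θ/2))^(2*α-1)*Real.cos (θ/2) - β*(2*Real.sin (θ/2))^(2*α)|
        = |2*α*(2*Real.sin (θ/2))^(2*α-1)*Real.cos (θ/2) + -(β*(2*Real.sin (θ/2))^(2*α))| := by
          rw [sub_eq_add_neg]
      _ ≤ |2*α*(2*Real.sin (θ/2))^(2*α-1)*Real.cos (θ/2)| + |-(β*(2*Real.sin (θ/2))^(2*α))| :=
          abs_add_le _ _
      _ = |2*α*(2*Real.sin (θ/2))^(2*α-1)*Real.cos (θ/2)| + |β*(2*Real.sin (θ/2))^(2*α)| := by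
          rw [abs_neg]
      _ ≤ (2*α + 2*|β|) * (2*Real.sin (θ/2))^(2*α-1) := by nlinarith
  unfold DFH
  rw [norm_mul, Complex.norm_real, Real.norm_eq_abs, abs_mul, Real.abs_exp]
  have t3 : |2*α*(2*Real.sin (θ/2))^(2*α-1)*Real.cos (θ/2) - β*(2*Real.sin (θ/2))^(2*α)|
      * Real.exp (-β*(θ-Real.pi))
      ≤ ((2*α + 2*|β|) * (2*Real.sin (θ/2))^(2*α-1)) * Real.exp (|β| * Real.pi) :=
    mul_le_mul hA hE (Real.exp_pos _).le (by positivity)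
  calc ‖FHC α β‖ * (|2*α*(2*Real.sin (θ/2))^(2*α-1)*Real.cos (θ/2)
          - β*(2*Real.sin (θ/2))^(2*α)| * Real.exp (-β*(θ-Real.pi)))
      ≤ ‖FHC α β‖ * (((2*α + 2*|β|) * (2*Real.sin (θ/2))^(2*α-1)) * Real.exp (|β| * Real.pi)) :=
        mul_le_mul_of_nonneg_left t3 (norm_nonneg _)
    _ = ‖FHC α β‖ * ((2*α + 2*|β|) * Real.exp (|β| * Real.pi)) * (2*Real.sin (θ/2))^(2*α-1) := by
        ring

lemma continuousOn_sinpow (e : ℝ) :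
    ContinuousOn (fun θ : ℝ => ((2*Real.sin (θ/2))^e : ℝ)) (Ioo 0 (2*Real.pi)) := by
  intro x hx
  have hs : 0 < Real.sin (x/2) :=
    Real.sin_pos_of_pos_of_lt_pi (by linarith [hx.1]) (by linarith [hx.2])
  exact (ContinuousAt.rpow_const (by fun_prop) (Or.inl (by positivity))).continuousWithinAt

lemma continuousOn_DFH (α β : ℝ) : ContinuousOn (DFH α β) (Ioo 0 (2*Real.pi)) := by
  unfold DFH
  apply ContinuousOn.mul continuousOn_const
  apply Complex.continuous_ofReal.comp_continuousOn
  apply ContinuousOn.mul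
  · apply ContinuousOn.sub
    · exact (continuousOn_const.mul (continuousOn_sinpow (2*α-1))).mul
        (Continuous.continuousOn (by fun_prop))
    · exact continuousOn_const.mul (continuousOn_sinpow (2*α))
  · exact Continuous.continuousOn (by fun_prop)

lemma intInt_mul_DFH (α β : ℝ) (hα : 0 < α) (f : ℝ → ℂ) (hf : Continuous f) :
    IntervalIntegrable (fun θ => f θ * DFH α β θ) volume 0 (2*Real.pi) := by
  obtain ⟨Cf, hCf⟩ := (isCompact_Icc (a := (0:ℝ)) (b := 2*Real.pi)).exists_bound_of_continuousOn
    hf.continuousOn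
  apply intInt_of_bound (e := 2*α-1) (by linarith)
    _ (Cf * (‖FHC α β‖ * ((2*α + 2*|β|) * Real.exp (|β| * Real.pi))))
  · exact hf.continuousOn.mul (continuousOn_DFH α β)
  · intro θ hθ
    have hmem : θ ∈ Icc (0:ℝ) (2*Real.pi) := ⟨hθ.1.le, hθ.2.le⟩
    have hCf0 : 0 ≤ Cf := le_trans (norm_nonneg (f θ)) (hCf θ hmem)
    rw [norm_mul]
    calc ‖f θ‖ * ‖DFH α β θ‖
        ≤ Cf * (‖FHC α β‖ * ((2*α + 2*|β|) * Real.exp (|β| * Real.pi)) *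
            (2*Real.sin (θ/2))^(2*α-1)) :=
          mul_le_mul (hCf θ hmem) (norm_DFH_le α β hα hθ) (norm_nonneg _) hCf0
      _ = Cf * (‖FHC α β‖ * ((2*α + 2*|β|) * Real.exp (|β| * Real.pi))) *
            (2*Real.sin (θ/2))^(2*α-1) := by ring

end FHaux

open MeasureTheory in
theorem FH_In_Jn (α β : ℝ) (hα : 0 < α)
    (φ : ℕ → Polynomial ℂ) (hφ : OPS (FHw α β) φ) (n : ℕ) :
    (∫ θ in (0:ℝ)..(2 * Real.pi),
        (φ n).eval (uc θ) * (starRingEnd ℂ) ((starRev (φ n)).eval (uc θ)) * FHw α β θ)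
      = rC φ n ∧
    (∫ θ in (0:ℝ)..(2 * Real.pi),
        ((φ n).eval (uc θ) * (starRingEnd ℂ) ((starRev (φ n)).eval (uc θ)) / (1 - uc θ))
          * FHw α β θ)
      = ((α : ℂ) + (β : ℂ) * Complex.I - (n : ℂ)) * rC φ n / (2 * (α : ℂ)) := by
  have hπ := Real.pi_pos
  have hnd : (φ n).natDegree = n := FHaux.natDeg hφ n
  have hA1 : ∀ θ : ℝ, (starRingEnd ℂ) ((starRev (φ n)).eval (uc θ))
      = ((uc θ)⁻¹)^n * (φ n).eval (uc θ) := by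
    intro θ
    rw [FHaux.conj_starRev_eval (φ n) θ, hnd]
  have hI : (∫ θ in (0:ℝ)..(2*Real.pi),
      (φ n).eval (uc θ) * (starRingEnd ℂ) ((starRev (φ n)).eval (uc θ)) * FHw α β θ)
      = rC φ n := by
    have hgWpt : ∀ θ ∈ Set.uIcc (0:ℝ) (2*Real.pi),
        (fun θ => (φ n).eval (uc θ) * (starRingEnd ℂ) ((starRev (φ n)).eval (uc θ)) * FHw α β θ) θ
        = (fun θ => (φ n).eval (uc θ) * (((uc θ)⁻¹)^n * (φ n).eval (uc θ)) * FHw α β θ) θ :=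
      fun θ _ => by simp only [hA1]
    rw [intervalIntegral.integral_congr hgWpt, FHaux.ML hα hφ n (φ n) (le_of_eq hnd)]
    rfl
  refine ⟨hI, ?_⟩
  set g : ℝ → ℂ := fun θ => (φ n).eval (uc θ) * (((uc θ)⁻¹)^n * (φ n).eval (uc θ)) with hgdef
  have hgcont : Continuous g := (FHaux.continuous_evalp (φ n)).mul
    ((FHaux.continuous_ucinv_pow n).mul (FHaux.continuous_evalp (φ n)))
  have hgW : (∫ θ in (0:ℝ)..(2*Real.pi), g θ * FHw α β θ) = rC φ n := by
    have h := FHaux.ML hα hφ n (φ n) (le_of_eq hnd)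
    unfold rC
    rw [← h]
  have hQ2deg : (C 2 * X * derivative (φ n)).natDegree ≤ n := by
    rcases Nat.eq_zero_or_pos n with h0 | hpos
    · have hc : φ n = C ((φ n).coeff 0) :=
        Polynomial.eq_C_of_natDegree_eq_zero (h0 ▸ hnd)
      rw [hc, derivative_C, mul_zero]
      simp [h0]
    · calc (C 2 * X * derivative (φ n)).natDegree
          ≤ (C (2:ℂ) * X).natDegree + (derivative (φ n)).natDegree :=
            Polynomial.natDegree_mul_le
        _ ≤ ((C (2:ℂ)).natDegree + (X : Polynomial ℂ).natDegree) + ((φ n).natDegree - 1) :=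
            add_le_add Polynomial.natDegree_mul_le (Polynomial.natDegree_derivative_le (φ n))
        _ ≤ (0 + 1) + (n - 1) := by
            rw [Polynomial.natDegree_C, hnd]
            exact add_le_add (add_le_add le_rfl Polynomial.natDegree_X_le) le_rfl
        _ = n := by omega
  have hQ2c0 : (C 2 * X * derivative (φ n)).coeff 0 = 0 := by
    rw [Polynomial.mul_coeff_zero, Polynomial.mul_coeff_zero, coeff_X_zero, mul_zero, zero_mul]
  have hQ2W : (∫ θ in (0:ℝ)..(2*Real.pi),
      (C 2 * X * derivative (φ n)).eval (uc θ) * (((uc θ)⁻¹)^n * (φ n).eval (uc θ)) * FHw α β θ)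
      = 0 := by
    rw [FHaux.ML hα hφ n (C 2 * X * derivative (φ n)) hQ2deg, hQ2c0, zero_div]
  have hQ2cont : Continuous (fun θ : ℝ =>
      (C 2 * X * derivative (φ n)).eval (uc θ) * (((uc θ)⁻¹)^n * (φ n).eval (uc θ))) :=
    (FHaux.continuous_evalp _).mul ((FHaux.continuous_ucinv_pow n).mul (FHaux.continuous_evalp _))
  have hint1 : IntervalIntegrable (fun θ =>
      ((C 2 * X * derivative (φ n)).eval (uc θ) * (((uc θ)⁻¹)^n * (φ n).eval (uc θ))) * FHw α β θ)
      volume 0 (2*Real.pi) := FHaux.intInt_mul_FHw α β hα _ hQ2cont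
  have hint2 : IntervalIntegrable (fun θ => g θ * FHw α β θ) volume 0 (2*Real.pi) :=
    FHaux.intInt_mul_FHw α β hα g hgcont
  -- integral of Dg * W
  have hDgW : (∫ θ in (0:ℝ)..(2*Real.pi),
      (Complex.I * ((C 2 * X * derivative (φ n)).eval (uc θ) * (((uc θ)⁻¹)^n * (φ n).eval (uc θ)))
        - Complex.I * n * g θ) * FHw α β θ)
      = - (Complex.I * n * rC φ n) := by
    have hpt : ∀ θ ∈ Set.uIcc (0:ℝ) (2*Real.pi), (fun θ =>
        (Complex.I * ((C 2 * X * derivative (φ n)).eval (uc θ) * (((uc θ)⁻¹)^n * (φ n).eval (uc θ)))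
          - Complex.I * n * g θ) * FHw α β θ) θ
        = (fun θ => Complex.I * (((C 2 * X * derivative (φ n)).eval (uc θ)
              * (((uc θ)⁻¹)^n * (φ n).eval (uc θ))) * FHw α β θ)
            - (Complex.I * n) * (g θ * FHw α β θ)) θ := fun θ _ => by simp only [hgdef]; ring
    rw [intervalIntegral.integral_congr hpt,
      intervalIntegral.integral_sub (hint1.const_mul _) (hint2.const_mul _),
      intervalIntegral.integral_const_mul, intervalIntegral.integral_const_mul]
    have hQ2W' : (∫ θ in (0:ℝ)..(2*Real.pi),
        ((C 2 * X * derivative (φ n)).eval (uc θ) * (((uc θ)⁻¹)^n * (φ n).eval (uc θ))) * FHw α β θ)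
        = 0 := by
      rw [← hQ2W]
    rw [hQ2W', hgW]
    ring
  have hgDFH_int : IntervalIntegrable (fun θ => g θ * FHaux.DFH α β θ) volume 0 (2*Real.pi) :=
    FHaux.intInt_mul_DFH α β hα g hgcont
  have hDgcont : Continuous (fun θ =>
      Complex.I * ((C 2 * X * derivative (φ n)).eval (uc θ) * (((uc θ)⁻¹)^n * (φ n).eval (uc θ)))
        - Complex.I * n * g θ) :=
    (continuous_const.mul hQ2cont).sub (continuous_const.mul hgcont)
  have hDgWint : IntervalIntegrable (fun θ =>
      (Complex.I * ((C 2 * X * derivative (φ n)).eval (uc θ) * (((uc θ)⁻¹)^n * (φ n).eval (uc θ)))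
        - Complex.I * n * g θ) * FHw α β θ) volume 0 (2*Real.pi) :=
    FHaux.intInt_mul_FHw α β hα _ hDgcont
  have hIBP : (∫ θ in (0:ℝ)..(2*Real.pi),
      ((Complex.I * ((C 2 * X * derivative (φ n)).eval (uc θ) * (((uc θ)⁻¹)^n * (φ n).eval (uc θ)))
        - Complex.I * n * g θ) * FHw α β θ + g θ * FHaux.DFH α β θ)) = 0 := by
    have hcont : ContinuousOn (fun θ => g θ * FHw α β θ) (Set.Icc 0 (2*Real.pi)) :=
      (hgcont.mul (FHaux.continuous_FHw α β hα)).continuousOn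
    have hderiv : ∀ x ∈ Set.Ioo (0:ℝ) (2*Real.pi), HasDerivWithinAt (fun θ => g θ * FHw α β θ)
        ((Complex.I * ((C 2 * X * derivative (φ n)).eval (uc x) * (((uc x)⁻¹)^n * (φ n).eval (uc x)))
          - Complex.I * n * g x) * FHw α β x + g x * FHaux.DFH α β x) (Set.Ioi x) x := by
      intro x hx
      exact ((FHaux.hasDerivAt_g (φ n) n x).mul (FHaux.hasDerivAt_FHw α β hx)).hasDerivWithinAt
    rw [intervalIntegral.integral_eq_sub_of_hasDeriv_right_of_le (by linarith) hcont hderiv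
      (hDgWint.add hgDFH_int)]
    rw [FHaux.FHw_tpi α β hα, FHaux.FHw_zero α β hα, mul_zero, mul_zero, sub_zero]
  have hgDFH : (∫ θ in (0:ℝ)..(2*Real.pi), g θ * FHaux.DFH α β θ)
      = Complex.I * n * rC φ n := by
    rw [intervalIntegral.integral_add hDgWint hgDFH_int, hDgW] at hIBP
    linear_combination hIBP
  -- the J integral
  have hPC : ∀ᵐ θ : ℝ ∂MeasureTheory.volume, θ ∈ Set.uIoc (0:ℝ) (2*Real.pi) →
      ((φ n).eval (uc θ) * (starRingEnd ℂ) ((starRev (φ n)).eval (uc θ)) / (1 - uc θ))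
          * FHw α β θ
      = (1/2 + Complex.I*(β:ℂ)/(2*(α:ℂ))) * (g θ * FHw α β θ)
          + (Complex.I/(2*(α:ℂ))) * (g θ * FHaux.DFH α β θ) := by
    have h2πvol : ∀ᵐ θ : ℝ ∂MeasureTheory.volume, θ ≠ 2*Real.pi := by
      refine MeasureTheory.ae_iff.2 ?_
      have h : {θ : ℝ | ¬ θ ≠ 2*Real.pi} = {2*Real.pi} := by ext x; simp
      rw [h]
      exact Real.volume_singleton
    refine h2πvol.mono (fun θ hne hmem => ?_)
    rw [Set.uIoc_of_le (by linarith : (0:ℝ) ≤ 2*Real.pi)] at hmem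
    obtain ⟨h0, h2⟩ := hmem
    have h2' : θ < 2*Real.pi := lt_of_le_of_ne h2 hne
    have hs : 0 < Real.sin (θ/2) :=
      Real.sin_pos_of_pos_of_lt_pi (by linarith) (by linarith)
    rw [hA1 θ]
    have hkey : 2*α*(2*Real.sin (θ/2))^(2*α-1)*Real.cos (θ/2) - β*(2*Real.sin (θ/2))^(2*α)
        = (α * (Real.cos (θ/2)/Real.sin (θ/2)) - β) * (2*Real.sin (θ/2))^(2*α) := by
      rw [Real.rpow_sub_one (by positivity : (2*Real.sin (θ/2)) ≠ 0) (2*α)]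
      field_simp
    have hDFHeq : FHaux.DFH α β θ
        = ((α * (Real.cos (θ/2)/Real.sin (θ/2)) - β : ℝ) : ℂ) * FHw α β θ := by
      unfold FHaux.DFH FHw
      rw [hkey]
      push_cast
      ring
    rw [hDFHeq, div_eq_mul_inv, FHaux.inv_one_sub_uc hs.ne']
    have hαC : (α:ℂ) ≠ 0 := by exact_mod_cast hα.ne'
    set t := Real.cos (θ/2)/Real.sin (θ/2) with htdef
    push_cast
    field_simp
    ring
  rw [intervalIntegral.integral_congr_ae hPC]
  rw [intervalIntegral.integral_add (hint2.const_mul _) (hgDFH_int.const_mul _)]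
  rw [intervalIntegral.integral_const_mul, intervalIntegral.integral_const_mul, hgW, hgDFH]
  have hαC : (α:ℂ) ≠ 0 := by exact_mod_cast hα.ne'
  field_simp
  linear_combination ((n:ℂ)*(rC φ n)) * Complex.I_sq
end

section
/- Let α > 0, β ∈ ℝ, let w be the normalized pure Fisher–Hartwig weight with parameters α, β, and let (φ_n) be a system of orthonormal polynomials for w. For each n ≥ 0 define L_n = ∫_0^{2π} [φ_n(ξ)·conj(φ_n(ξ))/(1−ξ)]·w(ξ) dθ, where ξ = e^{iθ}. Then L_n = (α + iβ)/(2α) for every n ≥ 0. -/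
open Complex Polynomial

/-! ### Auxiliary definitions -/

open MeasureTheory intervalIntegral

noncomputable def wR (α β θ : ℝ) : ℝ :=
  (2 * Real.sin (θ / 2)) ^ (2 * α) * Real.exp (-β * (θ - Real.pi))

noncomputable def ct (θ : ℝ) : ℝ := Real.cos (θ / 2) / Real.sin (θ / 2)

/-! ### Basic properties of the weight -/

lemma FHw_eq (α β θ : ℝ) : FHw α β θ = FHC α β * (wR α β θ : ℂ) := by
  simp [FHw, wR, Complex.ofReal_mul, mul_assoc]

lemma conj_FHC (α β : ℝ) : (starRingEnd ℂ) (FHC α β) = FHC α β := by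
  have h1 : (starRingEnd ℂ) (1 + (α : ℂ) + (β : ℂ) * Complex.I) =
      1 + (α : ℂ) - (β : ℂ) * Complex.I := by
    simp [map_add, map_mul, Complex.conj_ofReal, Complex.conj_I]
    ring
  have h2 : (starRingEnd ℂ) (1 + (α : ℂ) - (β : ℂ) * Complex.I) =
      1 + (α : ℂ) + (β : ℂ) * Complex.I := by
    simp [map_sub, map_add, map_mul, Complex.conj_ofReal, Complex.conj_I]
  have h3 : (starRingEnd ℂ) (1 + 2 * (α : ℂ)) = 1 + 2 * (α : ℂ) := by
    simp [map_add, map_mul, map_ofNat, Complex.conj_ofReal]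
  rw [FHC, map_div₀, map_mul, map_mul, map_mul, ← Complex.Gamma_conj, ← Complex.Gamma_conj,
    ← Complex.Gamma_conj, h1, h2, h3]
  simp [Complex.conj_ofReal, map_ofNat]
  ring

lemma conj_FHw (α β θ : ℝ) : (starRingEnd ℂ) (FHw α β θ) = FHw α β θ := by
  rw [FHw_eq, map_mul, conj_FHC, Complex.conj_ofReal]

lemma cont_wR (α β : ℝ) (hα : 0 < α) : Continuous (wR α β) := by
  apply Continuous.mul
  · apply Continuous.rpow_const
    · fun_prop
    · intro x; right; positivity
  · fun_prop

lemma cont_FHw (α β : ℝ) (hα : 0 < α) : Continuous (FHw α β) := by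
  have : Continuous fun θ : ℝ => ((wR α β θ : ℝ) : ℂ) :=
    Complex.continuous_ofReal.comp (cont_wR α β hα)
  rw [show FHw α β = fun θ => FHC α β * ((wR α β θ : ℝ) : ℂ) from funext fun θ => FHw_eq α β θ]
  exact continuous_const.mul this

lemma FHw_zero (α β : ℝ) (hα : 0 < α) : FHw α β 0 = 0 := by
  rw [FHw_eq]
  simp [wR, Real.zero_rpow (by positivity : (2*α) ≠ 0)]

lemma FHw_two_pi (α β : ℝ) (hα : 0 < α) : FHw α β (2 * Real.pi) = 0 := by
  rw [FHw_eq]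
  simp [wR, Real.zero_rpow (by positivity : (2*α) ≠ 0)]

lemma hasDerivAt_wR (α β : ℝ) (hα : 0 < α) {θ : ℝ} (hθ : θ ∈ Set.Ioo 0 (2 * Real.pi)) :
    HasDerivAt (wR α β) ((α * ct θ - β) * wR α β θ) θ := by
  have hs : 0 < Real.sin (θ / 2) :=
    Real.sin_pos_of_pos_of_lt_pi (by linarith [hθ.1]) (by linarith [hθ.2])
  have hb : (0:ℝ) < 2 * Real.sin (θ / 2) := by linarith
  have h1 : HasDerivAt (fun θ : ℝ => 2 * Real.sin (θ / 2)) (Real.cos (θ / 2)) θ := by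
    have := ((Real.hasDerivAt_sin (θ / 2)).comp θ ((hasDerivAt_id θ).div_const 2)).const_mul (2:ℝ)
    refine this.congr_deriv ?_
    ring
  have h2 : HasDerivAt (fun θ : ℝ => (2 * Real.sin (θ / 2)) ^ (2 * α))
      (Real.cos (θ / 2) * (2 * α) * (2 * Real.sin (θ / 2)) ^ (2 * α - 1)) θ :=
    h1.rpow_const (Or.inl hb.ne')
  have h3 : HasDerivAt (fun θ : ℝ => Real.exp (-β * (θ - Real.pi)))
      (Real.exp (-β * (θ - Real.pi)) * (-β)) θ := by
    have : HasDerivAt (fun θ : ℝ => -β * (θ - Real.pi)) (-β) θ := by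
      simpa using ((hasDerivAt_id θ).sub_const Real.pi).const_mul (-β)
    simpa using this.exp
  have := h2.mul h3
  refine this.congr_deriv ?_
  rw [wR, ct]
  have key : (2 * Real.sin (θ / 2)) ^ (2 * α - 1)
      = (2 * Real.sin (θ / 2)) ^ (2 * α) / (2 * Real.sin (θ / 2)) := by
    rw [Real.rpow_sub hb, Real.rpow_one]
  rw [key]
  field_simp
  ring

lemma hasDerivAt_FHw (α β : ℝ) (hα : 0 < α) {θ : ℝ} (hθ : θ ∈ Set.Ioo 0 (2 * Real.pi)) :
    HasDerivAt (FHw α β) (((α * ct θ - β : ℝ) : ℂ) * FHw α β θ) θ := by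
  have h := ((hasDerivAt_wR α β hα hθ).ofReal_comp).const_mul (FHC α β)
  have he : (fun θ => FHC α β * ((wR α β θ : ℝ) : ℂ)) = FHw α β := by
    funext t; rw [FHw_eq]
  rw [he] at h
  refine h.congr_deriv ?_
  rw [FHw_eq]
  push_cast
  ring

/-! ### The unit circle map -/

lemma uc_eq (θ : ℝ) : uc θ = (Real.cos θ : ℂ) + (Real.sin θ : ℂ) * Complex.I := by
  rw [uc, Complex.exp_mul_I, Complex.ofReal_cos, Complex.ofReal_sin]

lemma norm_uc' (θ : ℝ) : ‖uc θ‖ = 1 := by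
  rw [uc]
  simpa using Complex.norm_exp (θ * Complex.I)

lemma cont_uc : Continuous uc := by
  unfold uc; fun_prop

lemma inv_one_sub_uc {θ : ℝ} (hs : Real.sin (θ / 2) ≠ 0) :
    (1 - uc θ)⁻¹ = 1 / 2 + ((ct θ / 2 : ℝ) : ℂ) * Complex.I := by
  set s := Real.sin (θ / 2) with hsdef
  set c := Real.cos (θ / 2) with hcdef
  have h1 := Real.cos_two_mul' (θ/2)
  have h2 := Real.sin_sq_add_cos_sq (θ/2)
  rw [show 2*(θ/2) = θ by ring] at h1
  have hcos : Real.cos θ = 1 - 2*s^2 := by rw [h1]; rw [← hsdef, ← hcdef] at h2 ⊢; linarith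
  have hsin : Real.sin θ = 2*s*c := by
    have h := Real.sin_two_mul (θ/2); rw [show 2*(θ/2) = θ by ring] at h; rw [h]
  have hsc : (s : ℂ)^2 + (c : ℂ)^2 = 1 := by norm_cast
  have hs' : (s : ℂ) ≠ 0 := by exact_mod_cast hs
  apply inv_eq_of_mul_eq_one_right
  rw [uc_eq, hcos, hsin, ct, ← hsdef, ← hcdef]
  push_cast [Complex.ofReal_mul, Complex.ofReal_div, Complex.ofReal_sub, Complex.ofReal_pow,
    Complex.ofReal_one, Complex.ofReal_ofNat]
  field_simp
  ring_nf
  rw [Complex.I_sq]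
  linear_combination 2*(s:ℂ) * hsc

/-! ### Derivatives of polynomial evaluations along the circle -/

lemma hasDerivAt_eval_uc (p : Polynomial ℂ) (θ : ℝ) :
    HasDerivAt (fun t : ℝ => p.eval (uc t))
      (p.derivative.eval (uc θ) * (uc θ * Complex.I)) θ := by
  have hexp : HasDerivAt (fun z : ℂ => Complex.exp (z * Complex.I))
      (Complex.exp ((θ:ℂ) * Complex.I) * Complex.I) (θ:ℂ) := by
    simpa using ((hasDerivAt_id (θ:ℂ)).mul_const Complex.I).cexp
  have h := ((p.hasDerivAt (Complex.exp ((θ:ℂ) * Complex.I))).comp (θ:ℂ) hexp).comp_ofReal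
  simpa [uc, Function.comp, mul_assoc] using h

lemma hasDerivAt_conj_comp {f : ℝ → ℂ} {f' : ℂ} {x : ℝ} (h : HasDerivAt f f' x) :
    HasDerivAt (fun t => (starRingEnd ℂ) (f t)) ((starRingEnd ℂ) f') x := by
  have hl : HasFDerivAt (fun z : ℂ => (starRingEnd ℂ) z)
      (Complex.conjCLE.toContinuousLinearMap) (f x) :=
    Complex.conjCLE.toContinuousLinearMap.hasFDerivAt
  exact hl.comp_hasDerivAt x h

/-! ### Integrability of the singular part -/

lemma II_sin (α : ℝ) (hα : 0 < α) :
    IntervalIntegrable (fun θ : ℝ => Real.sin (θ / 2) ^ (2 * α - 1))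
      volume 0 (2 * Real.pi) := by
  have meas : Measurable fun θ : ℝ => Real.sin (θ / 2) ^ (2 * α - 1) := by fun_prop
  have hpi : (0:ℝ) < Real.pi := Real.pi_pos
  rcases le_or_gt 1 (2 * α) with hcase | hcase
  · apply IntervalIntegrable.mono_fun (g := fun θ : ℝ => Real.sin (θ / 2) ^ (2 * α - 1))
      (_root_.intervalIntegrable_const (c := (1:ℝ))) meas.aestronglyMeasurable
    rw [Filter.EventuallyLE, ae_restrict_iff' measurableSet_uIoc]
    apply Filter.Eventually.of_forall
    intro θ hθ
    rw [Set.uIoc_of_le (by positivity)] at hθ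
    have h1 : 0 ≤ Real.sin (θ/2) :=
      Real.sin_nonneg_of_nonneg_of_le_pi (by linarith [hθ.1]) (by linarith [hθ.2])
    have h2 : Real.sin (θ/2) ^ (2*α-1) ≤ 1 :=
      Real.rpow_le_one h1 (Real.sin_le_one _) (by linarith)
    have h3 : (0:ℝ) ≤ Real.sin (θ/2) ^ (2*α-1) := Real.rpow_nonneg h1 _
    simp only [Real.norm_eq_abs, _root_.abs_of_nonneg h3]
    simpa using h2.trans (le_abs_self 1)
  · have hr : (-1:ℝ) < 2*α - 1 := by linarith
    have hrle : 2*α - 1 ≤ 0 := by linarith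
    have hrne : 2*α - 1 ≠ 0 := by linarith
    have base : IntervalIntegrable (fun x : ℝ => Real.pi ^ (1 - 2*α) * x ^ (2*α - 1))
        volume 0 Real.pi := (intervalIntegrable_rpow' hr).const_mul _
    have hpow : ∀ x : ℝ, 0 < x →
        Real.pi ^ (1 - 2*α) * x ^ (2*α-1) = (x / Real.pi) ^ (2*α-1) := by
      intro x hx
      rw [Real.div_rpow hx.le hpi.le, show (1 - 2*α) = -(2*α-1) by ring,
        Real.rpow_neg hpi.le, inv_mul_eq_div]
    have left : IntervalIntegrable (fun θ : ℝ => Real.sin (θ / 2) ^ (2 * α - 1))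
        volume 0 Real.pi := by
      apply base.mono_fun meas.aestronglyMeasurable
      rw [Filter.EventuallyLE, ae_restrict_iff' measurableSet_uIoc]
      apply Filter.Eventually.of_forall
      intro θ hθ
      rw [Set.uIoc_of_le hpi.le] at hθ
      have hθ1 : 0 < θ := hθ.1
      have hθ2 : θ ≤ Real.pi := hθ.2
      have hsb : θ / Real.pi ≤ Real.sin (θ/2) := by
        have h := Real.mul_le_sin (x := θ/2) (by linarith) (by linarith)
        calc θ / Real.pi = 2 / Real.pi * (θ/2) := by field_simp
          _ ≤ Real.sin (θ/2) := h
      have hpos : 0 < θ / Real.pi := by positivity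
      have key : Real.sin (θ/2) ^ (2*α-1) ≤ (θ / Real.pi) ^ (2*α-1) :=
        Real.rpow_le_rpow_of_nonpos hpos hsb hrle
      have hsn : 0 ≤ Real.sin (θ/2) := le_trans hpos.le hsb
      simp only [Real.norm_eq_abs, _root_.abs_of_nonneg (Real.rpow_nonneg hsn _)]
      rw [_root_.abs_of_nonneg]
      · rw [hpow θ hθ1]; exact key
      · rw [hpow θ hθ1]; exact Real.rpow_nonneg hpos.le _
    have baseR : IntervalIntegrable
        (fun x : ℝ => Real.pi ^ (1 - 2*α) * (2*Real.pi - x) ^ (2*α - 1))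
        volume Real.pi (2*Real.pi) := by
      have h := (base.comp_sub_left (2*Real.pi)).symm
      rw [show 2*Real.pi - Real.pi = Real.pi by ring,
        show 2*Real.pi - 0 = 2*Real.pi by ring] at h
      exact h
    have right : IntervalIntegrable (fun θ : ℝ => Real.sin (θ / 2) ^ (2 * α - 1))
        volume Real.pi (2*Real.pi) := by
      apply baseR.mono_fun meas.aestronglyMeasurable
      rw [Filter.EventuallyLE, ae_restrict_iff' measurableSet_uIoc]
      apply Filter.Eventually.of_forall
      intro θ hθ
      rw [Set.uIoc_of_le (by linarith)] at hθ
      have hθ1 : Real.pi < θ := hθ.1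
      have hθ2 : θ ≤ 2*Real.pi := hθ.2
      rcases eq_or_lt_of_le hθ2 with rfl | hθ2'
      · simp only [Real.norm_eq_abs]
        rw [show (2*Real.pi)/2 = Real.pi by ring, Real.sin_pi, Real.zero_rpow hrne]
        simp
        positivity
      · have hsin : Real.sin (θ/2) = Real.sin (Real.pi - θ/2) := by
          rw [Real.sin_pi_sub]
        have hsb : (2*Real.pi - θ) / Real.pi ≤ Real.sin (θ/2) := by
          have h := Real.mul_le_sin (x := Real.pi - θ/2) (by linarith) (by linarith)
          rw [hsin]
          calc (2*Real.pi - θ) / Real.pi = 2 / Real.pi * (Real.pi - θ/2) := by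
                field_simp
            _ ≤ Real.sin (Real.pi - θ/2) := h
        have hpos : 0 < (2*Real.pi - θ) / Real.pi := by
          apply div_pos (by linarith) hpi
        have key : Real.sin (θ/2) ^ (2*α-1) ≤ ((2*Real.pi - θ) / Real.pi) ^ (2*α-1) :=
          Real.rpow_le_rpow_of_nonpos hpos hsb hrle
        have hsn : 0 ≤ Real.sin (θ/2) := le_trans hpos.le hsb
        simp only [Real.norm_eq_abs, _root_.abs_of_nonneg (Real.rpow_nonneg hsn _)]
        rw [_root_.abs_of_nonneg]
        · rw [hpow _ (by linarith)]; exact key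
        · rw [hpow _ (by linarith)]; exact Real.rpow_nonneg hpos.le _
    exact left.trans right

lemma eval_uc_bound (p : Polynomial ℂ) : ∃ M : ℝ, 0 ≤ M ∧ ∀ θ : ℝ, ‖p.eval (uc θ)‖ ≤ M := by
  refine ⟨∑ i ∈ Finset.range (p.natDegree + 1), ‖p.coeff i‖,
    Finset.sum_nonneg fun _ _ => norm_nonneg _, fun θ => ?_⟩
  rw [Polynomial.eval_eq_sum_range]
  refine le_trans (norm_sum_le _ _) (Finset.sum_le_sum fun i _ => ?_)
  rw [norm_mul, norm_pow, norm_uc', one_pow, mul_one]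

lemma norm_FHw (α β : ℝ) {θ : ℝ} (hθ : θ ∈ Set.Ioc 0 (2*Real.pi)) :
    ‖FHw α β θ‖ = ‖FHC α β‖ * (2 * Real.sin (θ/2)) ^ (2*α)
      * Real.exp (-β * (θ - Real.pi)) := by
  have hsn : 0 ≤ Real.sin (θ/2) :=
    Real.sin_nonneg_of_nonneg_of_le_pi (by linarith [hθ.1]) (by linarith [hθ.2])
  rw [FHw, norm_mul, norm_mul, Complex.norm_real, Complex.norm_real, Real.norm_eq_abs,
    Real.norm_eq_abs,
    _root_.abs_of_nonneg (Real.rpow_nonneg (by linarith) _),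
    _root_.abs_of_nonneg (Real.exp_nonneg _)]

lemma II_main (α β : ℝ) (hα : 0 < α) (f : ℝ → ℂ) (hf : Measurable f) (M : ℝ)
    (hM : ∀ θ, ‖f θ‖ ≤ M) :
    IntervalIntegrable (fun θ => f θ * ((ct θ : ℝ) : ℂ) * FHw α β θ)
      volume 0 (2*Real.pi) := by
  have hpi : (0:ℝ) < Real.pi := Real.pi_pos
  have hM0 : 0 ≤ M := le_trans (norm_nonneg _) (hM 0)
  set Cb : ℝ := ‖FHC α β‖ with hCb
  set E : ℝ := Real.exp (|β| * Real.pi) with hE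
  set K : ℝ := M * Cb * 2 ^ (2*α) * E with hK
  have hK0 : 0 ≤ K := by positivity
  have hFHwm : Measurable (FHw α β) := by
    unfold FHw
    fun_prop
  have measf : Measurable fun θ => f θ * ((ct θ : ℝ) : ℂ) * FHw α β θ := by
    apply Measurable.mul _ hFHwm
    apply hf.mul
    unfold ct
    fun_prop
  apply IntervalIntegrable.mono_fun ((II_sin α hα).const_mul K) measf.aestronglyMeasurable
  rw [Filter.EventuallyLE, ae_restrict_iff' measurableSet_uIoc]
  apply Filter.Eventually.of_forall
  intro θ hθ
  rw [Set.uIoc_of_le (by positivity)] at hθ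
  have hexpb : Real.exp (-β * (θ - Real.pi)) ≤ E := by
    rw [hE]
    apply Real.exp_le_exp.mpr
    calc -β * (θ - Real.pi) ≤ |(-β) * (θ - Real.pi)| := le_abs_self _
      _ = |β| * |θ - Real.pi| := by rw [abs_mul, abs_neg]
      _ ≤ |β| * Real.pi := by
          apply mul_le_mul_of_nonneg_left _ (abs_nonneg β)
          rw [abs_le]
          constructor <;> [linarith [hθ.1]; linarith [hθ.2]]
  have hsn : 0 ≤ Real.sin (θ/2) :=
    Real.sin_nonneg_of_nonneg_of_le_pi (by linarith [hθ.1]) (by linarith [hθ.2])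
  have hRHS0 : (0:ℝ) ≤ K * Real.sin (θ/2) ^ (2*α-1) := by
    apply mul_nonneg hK0 (Real.rpow_nonneg hsn _)
  rcases eq_or_lt_of_le hθ.2 with rfl | hlt
  · have : ct (2*Real.pi) = 0 := by
      rw [ct, show (2*Real.pi)/2 = Real.pi by ring, Real.sin_pi, div_zero]
    simp only [this, Complex.ofReal_zero, mul_zero, zero_mul, norm_zero, Real.norm_eq_abs]
    exact le_trans hRHS0 (le_abs_self _)
  · have hs : 0 < Real.sin (θ/2) :=
      Real.sin_pos_of_pos_of_lt_pi (by linarith [hθ.1]) (by linarith)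
    have hct : |ct θ| ≤ 1 / Real.sin (θ/2) := by
      rw [ct, abs_div, _root_.abs_of_pos hs]
      gcongr
      exact Real.abs_cos_le_one _
    have hnorm : ‖f θ * ((ct θ : ℝ) : ℂ) * FHw α β θ‖
        = ‖f θ‖ * |ct θ| * ‖FHw α β θ‖ := by
      rw [norm_mul, norm_mul, Complex.norm_real, Real.norm_eq_abs]
    rw [Real.norm_eq_abs, _root_.abs_of_nonneg hRHS0, hnorm, norm_FHw α β hθ]
    calc ‖f θ‖ * |ct θ| * (Cb * (2 * Real.sin (θ/2)) ^ (2*α) * Real.exp (-β * (θ - Real.pi)))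
        ≤ M * (1 / Real.sin (θ/2)) * (Cb * (2 * Real.sin (θ/2)) ^ (2*α) * E) := by
          gcongr <;> first | exact hM θ | exact hct
      _ = K * Real.sin (θ/2) ^ (2*α-1) := by
          rw [Real.mul_rpow (by norm_num) hsn, Real.rpow_sub_one hs.ne']
          field_simp
          ring

/-! ### Orthogonality integrals -/

noncomputable def Jf (α β : ℝ) (φ : ℕ → Polynomial ℂ) (n : ℕ) (p : Polynomial ℂ) : ℂ :=
  ∫ θ in (0:ℝ)..(2 * Real.pi),
    p.eval (uc θ) * (starRingEnd ℂ) ((φ n).eval (uc θ)) * FHw α β θ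

section Jlem
variable (α β : ℝ) (hα : 0 < α) (φ : ℕ → Polynomial ℂ) (n : ℕ)
include hα

lemma cont_Jf (p q : Polynomial ℂ) :
    Continuous (fun θ => p.eval (uc θ) * (starRingEnd ℂ) (q.eval (uc θ)) * FHw α β θ) := by
  apply Continuous.mul
  · apply Continuous.mul
    · exact (Polynomial.continuous p).comp cont_uc
    · exact Complex.continuous_conj.comp ((Polynomial.continuous q).comp cont_uc)
  · exact cont_FHw α β hα

lemma Jf_int (p q : Polynomial ℂ) :
    IntervalIntegrable (fun θ => p.eval (uc θ) * (starRingEnd ℂ) (q.eval (uc θ)) * FHw α β θ)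
      volume 0 (2 * Real.pi) :=
  (cont_Jf α β hα p q).intervalIntegrable 0 (2 * Real.pi)

lemma Jf_add (p q : Polynomial ℂ) :
    Jf α β φ n (p + q) = Jf α β φ n p + Jf α β φ n q := by
  unfold Jf
  rw [← intervalIntegral.integral_add (Jf_int α β hα p (φ n)) (Jf_int α β hα q (φ n))]
  apply intervalIntegral.integral_congr
  intro θ _
  simp [Polynomial.eval_add]
  ring

omit hα in
lemma Jf_smul (c : ℂ) (p : Polynomial ℂ) :
    Jf α β φ n (c • p) = c * Jf α β φ n p := by
  unfold Jf
  rw [← intervalIntegral.integral_const_mul]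
  apply intervalIntegral.integral_congr
  intro θ _
  simp [Polynomial.eval_smul]
  ring

omit hα in
lemma Jf_phi (hφ : OPS (FHw α β) φ) (k : ℕ) :
    Jf α β φ n (φ k) = if k = n then 1 else 0 := hφ.2.2 k n

omit hα in
lemma coeff_ne (hφ : OPS (FHw α β) φ) (k : ℕ) : (φ k).coeff k ≠ 0 := by
  obtain ⟨c, hc, hlc⟩ := hφ.2.1 k
  have hdeg : (φ k).natDegree = k := Polynomial.natDegree_eq_of_degree_eq_some (hφ.1 k)
  rw [show (φ k).coeff k = (φ k).coeff ((φ k).natDegree) by rw [hdeg],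
    Polynomial.coeff_natDegree, hlc]
  exact_mod_cast hc.ne'

lemma Jf_lowdeg (hφ : OPS (FHw α β) φ) :
    ∀ k : ℕ, k ≤ n → ∀ p : Polynomial ℂ, p.degree < (k : ℕ) → Jf α β φ n p = 0 := by
  intro k
  induction k with
  | zero =>
    intro _ p hp
    have hp0 : p = 0 :=
      Polynomial.degree_eq_bot.mp (Nat.WithBot.lt_zero_iff.mp (by exact_mod_cast hp))
    subst hp0
    unfold Jf; simp
  | succ k ih =>
    intro hk p hp
    have hkn : k < n := hk
    have hdegk : (φ k).degree = (k : ℕ) := hφ.1 k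
    set c : ℂ := p.coeff k / (φ k).coeff k with hc
    set r : Polynomial ℂ := p - c • φ k with hr
    have hrk : r.coeff k = 0 := by
      rw [hr]
      simp only [Polynomial.coeff_sub, Polynomial.coeff_smul, smul_eq_mul, hc]
      rw [div_mul_cancel₀ _ (coeff_ne α β φ hφ k), sub_self]
    have hrdeg : r.degree < (k : ℕ) := by
      rw [Polynomial.degree_lt_iff_coeff_zero]
      intro m hm
      rcases eq_or_lt_of_le hm with rfl | hm'
      · exact hrk
      · have h1 : p.coeff m = 0 :=
          Polynomial.coeff_eq_zero_of_degree_lt (lt_of_lt_of_le hp (by exact_mod_cast hm'))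
        have h2 : (φ k).coeff m = 0 :=
          Polynomial.coeff_eq_zero_of_degree_lt (by rw [hdegk]; exact_mod_cast hm')
        simp [hr, h1, h2]
    have hpr : p = r + c • φ k := by rw [hr]; ring
    rw [hpr, Jf_add α β hα, Jf_smul, ih (le_of_lt hkn) r hrdeg,
      Jf_phi α β φ n hφ k, if_neg (Nat.ne_of_lt hkn)]
    simp

lemma Jf_deg_le (hφ : OPS (FHw α β) φ) (p : Polynomial ℂ) (hp : p.degree ≤ (n : ℕ)) :
    Jf α β φ n p = p.coeff n / (φ n).coeff n := by
  have hdegn : (φ n).degree = (n : ℕ) := hφ.1 n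
  set c : ℂ := p.coeff n / (φ n).coeff n with hc
  set r : Polynomial ℂ := p - c • φ n with hr
  have hrk : r.coeff n = 0 := by
    rw [hr]
    simp only [Polynomial.coeff_sub, Polynomial.coeff_smul, smul_eq_mul, hc]
    rw [div_mul_cancel₀ _ (coeff_ne α β φ hφ n), sub_self]
  have hrdeg : r.degree < (n : ℕ) := by
    rw [Polynomial.degree_lt_iff_coeff_zero]
    intro m hm
    rcases eq_or_lt_of_le hm with rfl | hm'
    · exact hrk
    · have h1 : p.coeff m = 0 :=
        Polynomial.coeff_eq_zero_of_degree_lt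
          (lt_of_lt_of_le (lt_of_le_of_lt hp (by exact_mod_cast hm')) le_rfl)
      have h2 : (φ n).coeff m = 0 :=
        Polynomial.coeff_eq_zero_of_degree_lt (by rw [hdegn]; exact_mod_cast hm')
      simp [hr, h1, h2]
  have hpr : p = r + c • φ n := by rw [hr]; ring
  rw [hpr, Jf_add α β hα, Jf_smul, Jf_lowdeg α β hα φ n hφ n le_rfl r hrdeg,
    Jf_phi α β φ n hφ n, if_pos rfl]
  simp

end Jlem

lemma intervalIntegral_conj (f : ℝ → ℂ) (a b : ℝ) :
    (∫ x in a..b, (starRingEnd ℂ) (f x)) = (starRingEnd ℂ) (∫ x in a..b, f x) := by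
  rw [intervalIntegral, intervalIntegral, map_sub, ← integral_conj, ← integral_conj]

theorem FH_Ln (α β : ℝ) (hα : 0 < α)
    (φ : ℕ → Polynomial ℂ) (hφ : OPS (FHw α β) φ) (n : ℕ) :
    (∫ θ in (0:ℝ)..(2 * Real.pi),
        ((φ n).eval (uc θ) * (starRingEnd ℂ) ((φ n).eval (uc θ)) / (1 - uc θ))
          * FHw α β θ)
      = ((α : ℂ) + (β : ℂ) * Complex.I) / (2 * (α : ℂ)) := by
  have hπ : (0:ℝ) < Real.pi := Real.pi_pos
  have hαC : ((α:ℂ)) ≠ 0 := by exact_mod_cast hα.ne'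
  set p : Polynomial ℂ := φ n with hp
  set G : ℝ → ℂ := fun t => p.eval (uc t) with hG
  set Gd : ℝ → ℂ := fun t => p.derivative.eval (uc t) * (uc t * Complex.I) with hGd
  set wd : ℝ → ℂ := fun θ => ((α * ct θ - β : ℝ) : ℂ) * FHw α β θ with hwd
  obtain ⟨Mp, hMp0, hMp⟩ := eval_uc_bound p
  have hcontG : Continuous G := (Polynomial.continuous p).comp cont_uc
  have hcontGc : Continuous fun t => (starRingEnd ℂ) (G t) :=
    Complex.continuous_conj.comp hcontG
  have hcontGd : Continuous Gd := by
    apply Continuous.mul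
    · exact (Polynomial.continuous p.derivative).comp cont_uc
    · exact cont_uc.mul continuous_const
  have hFmeas : Measurable fun θ => G θ * (starRingEnd ℂ) (G θ) :=
    (hcontG.mul hcontGc).measurable
  have hFbound : ∀ θ, ‖G θ * (starRingEnd ℂ) (G θ)‖ ≤ Mp * Mp := by
    intro θ
    rw [norm_mul, RCLike.norm_conj]
    exact mul_le_mul (hMp θ) (hMp θ) (norm_nonneg _) hMp0
  -- integrability
  have int_Fw : IntervalIntegrable
      (fun θ => G θ * (starRingEnd ℂ) (G θ) * FHw α β θ) volume 0 (2*Real.pi) :=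
    ((hcontG.mul hcontGc).mul (cont_FHw α β hα)).intervalIntegrable 0 (2*Real.pi)
  have int_Fct : IntervalIntegrable
      (fun θ => (G θ * (starRingEnd ℂ) (G θ)) * ((ct θ : ℝ) : ℂ) * FHw α β θ)
      volume 0 (2*Real.pi) :=
    II_main α β hα _ hFmeas (Mp * Mp) hFbound
  have int_Fwd : IntervalIntegrable
      (fun θ => G θ * (starRingEnd ℂ) (G θ) * wd θ) volume 0 (2*Real.pi) := by
    have he : (fun θ => G θ * (starRingEnd ℂ) (G θ) * wd θ)
        = fun θ => (α:ℂ) * ((G θ * (starRingEnd ℂ) (G θ)) * ((ct θ : ℝ) : ℂ) * FHw α β θ)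
          - (β:ℂ) * (G θ * (starRingEnd ℂ) (G θ) * FHw α β θ) := by
      funext θ
      rw [hwd]
      push_cast
      ring
    rw [he]
    exact (int_Fct.const_mul _).sub (int_Fw.const_mul _)
  have int_Aint : IntervalIntegrable
      (fun θ => Gd θ * (starRingEnd ℂ) (G θ) * FHw α β θ) volume 0 (2*Real.pi) :=
    ((hcontGd.mul hcontGc).mul (cont_FHw α β hα)).intervalIntegrable 0 (2*Real.pi)
  have int_Bint : IntervalIntegrable
      (fun θ => G θ * (starRingEnd ℂ) (Gd θ) * FHw α β θ) volume 0 (2*Real.pi) :=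
    ((hcontG.mul (Complex.continuous_conj.comp hcontGd)).mul
      (cont_FHw α β hα)).intervalIntegrable 0 (2*Real.pi)
  -- FTC : ∫ (F w)' = 0
  have hFTC : (∫ θ in (0:ℝ)..(2*Real.pi),
      ((Gd θ * (starRingEnd ℂ) (G θ) + G θ * (starRingEnd ℂ) (Gd θ)) * FHw α β θ
        + G θ * (starRingEnd ℂ) (G θ) * wd θ)) = 0 := by
    have hcontH : ContinuousOn (fun θ => G θ * (starRingEnd ℂ) (G θ) * FHw α β θ)
        (Set.Icc 0 (2*Real.pi)) :=
      ((hcontG.mul hcontGc).mul (cont_FHw α β hα)).continuousOn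
    have hder : ∀ θ ∈ Set.Ioo (0:ℝ) (2*Real.pi),
        HasDerivWithinAt (fun t => G t * (starRingEnd ℂ) (G t) * FHw α β t)
          ((Gd θ * (starRingEnd ℂ) (G θ) + G θ * (starRingEnd ℂ) (Gd θ)) * FHw α β θ
            + G θ * (starRingEnd ℂ) (G θ) * wd θ) (Set.Ioi θ) θ := by
      intro θ hθ
      have h1 : HasDerivAt G (Gd θ) θ := hasDerivAt_eval_uc p θ
      have h2 : HasDerivAt (fun t => (starRingEnd ℂ) (G t)) ((starRingEnd ℂ) (Gd θ)) θ :=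
        hasDerivAt_conj_comp h1
      have h3 := (h1.mul h2).mul (hasDerivAt_FHw α β hα hθ)
      have h4 : HasDerivAt (fun t => G t * (starRingEnd ℂ) (G t) * FHw α β t)
          ((Gd θ * (starRingEnd ℂ) (G θ) + G θ * (starRingEnd ℂ) (Gd θ)) * FHw α β θ
            + G θ * (starRingEnd ℂ) (G θ) * wd θ) θ := by
        refine h3.congr_deriv ?_
        all_goals simp only [hwd, Pi.mul_apply]
      exact h4.hasDerivWithinAt
    have hint : IntervalIntegrable
        (fun θ => (Gd θ * (starRingEnd ℂ) (G θ) + G θ * (starRingEnd ℂ) (Gd θ)) * FHw α β θ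
          + G θ * (starRingEnd ℂ) (G θ) * wd θ) volume 0 (2*Real.pi) := by
      apply IntervalIntegrable.add _ int_Fwd
      have he : (fun θ => (Gd θ * (starRingEnd ℂ) (G θ) + G θ * (starRingEnd ℂ) (Gd θ))
          * FHw α β θ)
          = fun θ => Gd θ * (starRingEnd ℂ) (G θ) * FHw α β θ
            + G θ * (starRingEnd ℂ) (Gd θ) * FHw α β θ := by
        funext θ; ring
      rw [he]
      exact int_Aint.add int_Bint
    rw [intervalIntegral.integral_eq_sub_of_hasDeriv_right_of_le (by positivity)
      hcontH hder hint]
    rw [FHw_zero α β hα, FHw_two_pi α β hα]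
    ring
  -- the polynomial q = X * p'
  set q : Polynomial ℂ := Polynomial.X * p.derivative with hq
  have hdegp : p.degree = (n : ℕ) := hφ.1 n
  have hqdeg : q.degree ≤ (n : ℕ) := by
    rw [Polynomial.degree_le_iff_coeff_zero]
    intro m hm
    have hnm : n < m := by exact_mod_cast hm
    rcases m with _ | m'
    · omega
    · rw [hq, Polynomial.coeff_X_mul, Polynomial.coeff_derivative]
      have : p.coeff (m' + 1) = 0 :=
        Polynomial.coeff_eq_zero_of_degree_lt (by rw [hdegp]; exact_mod_cast hnm)
      rw [this, zero_mul]
  have hqcoeff : q.coeff n = (n:ℂ) * p.coeff n := by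
    rcases n with _ | m
    · simp [hq]
    · rw [hq, Polynomial.coeff_X_mul, Polynomial.coeff_derivative]
      push_cast
      ring
  have hJq : Jf α β φ n q = (n : ℂ) := by
    rw [Jf_deg_le α β hα φ n hφ q hqdeg, hqcoeff, ← hp, mul_div_assoc,
      div_self (coeff_ne α β φ hφ n), mul_one]
  -- value of ∫ Gd * conj G * w
  have hA : (∫ θ in (0:ℝ)..(2*Real.pi), Gd θ * (starRingEnd ℂ) (G θ) * FHw α β θ)
      = Complex.I * (n : ℂ) := by
    have he : (fun θ => Gd θ * (starRingEnd ℂ) (G θ) * FHw α β θ)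
        = fun θ => Complex.I *
          (q.eval (uc θ) * (starRingEnd ℂ) ((φ n).eval (uc θ)) * FHw α β θ) := by
      funext θ
      rw [hGd, hq]
      simp only [Polynomial.eval_mul, Polynomial.eval_X, ← hp]
      ring
    rw [he, intervalIntegral.integral_const_mul]
    have : (∫ θ in (0:ℝ)..(2*Real.pi),
        q.eval (uc θ) * (starRingEnd ℂ) ((φ n).eval (uc θ)) * FHw α β θ)
        = Jf α β φ n q := rfl
    rw [this, hJq]
  have hB : (∫ θ in (0:ℝ)..(2*Real.pi), G θ * (starRingEnd ℂ) (Gd θ) * FHw α β θ)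
      = (starRingEnd ℂ) (Complex.I * (n : ℂ)) := by
    rw [← hA, ← _root_.intervalIntegral_conj]
    apply intervalIntegral.integral_congr
    intro θ _
    simp only [map_mul, RingHomCompTriple.comp_apply, Complex.conj_conj, conj_FHw,
      RingHom.id_apply]
    ring
  -- hence ∫ F wd = 0
  have int_FdW : IntervalIntegrable
      (fun θ => (Gd θ * (starRingEnd ℂ) (G θ) + G θ * (starRingEnd ℂ) (Gd θ)) * FHw α β θ)
      volume 0 (2*Real.pi) := by
    have he : (fun θ => (Gd θ * (starRingEnd ℂ) (G θ) + G θ * (starRingEnd ℂ) (Gd θ))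
        * FHw α β θ)
        = fun θ => Gd θ * (starRingEnd ℂ) (G θ) * FHw α β θ
          + G θ * (starRingEnd ℂ) (Gd θ) * FHw α β θ := by
      funext θ; ring
    rw [he]
    exact int_Aint.add int_Bint
  have hFdW : (∫ θ in (0:ℝ)..(2*Real.pi),
      (Gd θ * (starRingEnd ℂ) (G θ) + G θ * (starRingEnd ℂ) (Gd θ)) * FHw α β θ)
      = Complex.I * (n:ℂ) + (starRingEnd ℂ) (Complex.I * (n:ℂ)) := by
    have he : (fun θ => (Gd θ * (starRingEnd ℂ) (G θ) + G θ * (starRingEnd ℂ) (Gd θ))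
        * FHw α β θ)
        = fun θ => Gd θ * (starRingEnd ℂ) (G θ) * FHw α β θ
          + G θ * (starRingEnd ℂ) (Gd θ) * FHw α β θ := by
      funext θ; ring
    rw [he, intervalIntegral.integral_add int_Aint int_Bint, hA, hB]
  have h0 : Complex.I * (n:ℂ) + (starRingEnd ℂ) (Complex.I * (n:ℂ)) = 0 := by
    simp only [map_mul, Complex.conj_I, map_natCast]
    ring
  have hFwd0 : (∫ θ in (0:ℝ)..(2*Real.pi), G θ * (starRingEnd ℂ) (G θ) * wd θ) = 0 := by
    have h := intervalIntegral.integral_add int_FdW int_Fwd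
    rw [hFTC] at h
    rw [hFdW, h0, zero_add] at h
    exact h.symm
  -- rewrite the original integrand
  set c1 : ℂ := 1/2 + Complex.I*(β:ℂ)/(2*(α:ℂ)) with hc1
  set c2 : ℂ := Complex.I/(2*(α:ℂ)) with hc2
  have hae : ∀ᵐ θ ∂(volume : Measure ℝ), θ ∈ Set.uIoc (0:ℝ) (2*Real.pi) →
      (p.eval (uc θ) * (starRingEnd ℂ) (p.eval (uc θ)) / (1 - uc θ)) * FHw α β θ
      = c1 * (G θ * (starRingEnd ℂ) (G θ) * FHw α β θ)
        + c2 * (G θ * (starRingEnd ℂ) (G θ) * wd θ) := by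
    have hne : ∀ᵐ θ : ℝ ∂(volume : Measure ℝ), θ ≠ 2*Real.pi := by
      rw [MeasureTheory.ae_iff]
      simp only [not_not]
      have hset : {θ : ℝ | θ = 2*Real.pi} = {2*Real.pi} := by ext x; simp
      rw [hset]
      exact measure_singleton _
    filter_upwards [hne] with θ hθne hθ
    rw [Set.uIoc_of_le (by positivity)] at hθ
    have hθ2 : θ < 2*Real.pi := lt_of_le_of_ne hθ.2 hθne
    have hs : 0 < Real.sin (θ/2) :=
      Real.sin_pos_of_pos_of_lt_pi (by linarith [hθ.1]) (by linarith)
    rw [div_eq_mul_inv, inv_one_sub_uc hs.ne']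
    simp only [hwd, hG, hc1, hc2]
    push_cast
    field_simp
    ring
  rw [intervalIntegral.integral_congr_ae hae,
    intervalIntegral.integral_add (int_Fw.const_mul c1) (int_Fwd.const_mul c2),
    intervalIntegral.integral_const_mul, intervalIntegral.integral_const_mul,
    hFwd0, mul_zero, add_zero]
  have horm : (∫ θ in (0:ℝ)..(2*Real.pi), G θ * (starRingEnd ℂ) (G θ) * FHw α β θ) = 1 := by
    have h := hφ.2.2 n n
    rw [if_pos rfl] at h
    exact h
  rw [horm, mul_one, hc1]
  field_simp
end
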